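/- If n ≥ 1 and n ≡ 0 (mod 24), then ν_3(a_n) = ν_3(n) + 2, where ν_3 denotes the 3-adic valuation. -/
import Mathlib

def narayana : ℕ → ℕ
  | 0 => 0
  | 1 => 1
  | 2 => 1
  | n + 3 => narayana (n + 2) + narayana n

namespace NarayanaAux

def M : Matrix (Fin 3) (Fin 3) ℕ := !![1,0,1;1,0,0;0,1,0]
def N : Matrix (Fin 3) (Fin 3) ℕ := !![1965,915,1341;1341,624,915;915,426,624]
def v0 : Fin 3 → ℕ := ![1,1,0]
def w : Fin 3 → ℕ := ![1028384, 701695, 478786]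
def c (k : ℕ) : ℕ := ((N^k).mulVec v0) 2

lemma hM3 : M^3 = !![2,1,1;1,1,1;1,0,1] := by
  rw [pow_succ, pow_succ, pow_one]
  ext i j
  fin_cases i <;> fin_cases j <;>
    simp [M, Matrix.mul_apply, Fin.sum_univ_three, Matrix.vecHead, Matrix.vecTail]

lemma hM6 : M^6 = !![6,3,4;4,2,3;3,1,2] := by
  have h : M^6 = M^3 * M^3 := by rw [← pow_add]
  rw [h, hM3]
  ext i j
  fin_cases i <;> fin_cases j <;>
    simp [Matrix.mul_apply, Fin.sum_univ_three, Matrix.vecHead, Matrix.vecTail]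

lemma hM12 : M^12 = !![60,28,41;41,19,28;28,13,19] := by
  have h : M^12 = M^6 * M^6 := by rw [← pow_add]
  rw [h, hM6]
  ext i j
  fin_cases i <;> fin_cases j <;>
    simp [Matrix.mul_apply, Fin.sum_univ_three, Matrix.vecHead, Matrix.vecTail]

lemma hM24 : M^24 = 1 + 3 • N := by
  have h : M^24 = M^12 * M^12 := by rw [← pow_add]
  rw [h, hM12]
  ext i j
  fin_cases i <;> fin_cases j <;>
    simp [N, Matrix.mul_apply, Fin.sum_univ_three, Matrix.one_apply, Matrix.vecHead,
      Matrix.vecTail]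

lemma hvec : ∀ n : ℕ, (M^n).mulVec v0 = ![narayana (n+2), narayana (n+1), narayana n] := by
  intro n
  induction n with
  | zero =>
    simp only [pow_zero, Matrix.one_mulVec]
    ext i
    fin_cases i <;> simp [v0, narayana]
  | succ n ih =>
    rw [pow_succ', ← Matrix.mulVec_mulVec, ih]
    ext i
    fin_cases i <;>
      simp [M, Matrix.mulVec, dotProduct, Fin.sum_univ_three, narayana]

lemma hNv : N.mulVec v0 = ![2880, 1965, 1341] := by
  ext i
  fin_cases i <;> simp [N, v0, Matrix.mulVec, dotProduct, Fin.sum_univ_three]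

lemma hN2v : (N^2).mulVec v0 = 9 • w := by
  rw [pow_two, ← Matrix.mulVec_mulVec, hNv]
  ext i
  fin_cases i <;> simp [N, w, Matrix.mulVec, dotProduct, Fin.sum_univ_three]

lemma hc0 : c 0 = 0 := by simp [c, v0]

lemma hc1 : c 1 = 1341 := by
  simp only [c, pow_one, hNv]
  rfl

lemma hc9 {k : ℕ} (hk : 2 ≤ k) : 9 ∣ c k := by
  have hk2 : N^k = N^(k-2) * N^2 := by rw [← pow_add]; congr 1; omega
  have : c k = ((N^(k-2)).mulVec ((N^2).mulVec v0)) 2 := by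
    rw [c, hk2, ← Matrix.mulVec_mulVec]
  rw [this, hN2v, Matrix.mulVec_smul, Pi.smul_apply, smul_eq_mul]
  exact Dvd.intro _ rfl

lemma add_two_le_three_pow {j : ℕ} (hj : 1 ≤ j) : j + 2 ≤ 3 ^ j := by
  induction j with
  | zero => omega
  | succ i ih =>
    rcases Nat.eq_or_lt_of_le hj with h | h
    · simp [← h]
    · have hi : 1 ≤ i := by omega
      have h3 : i + 2 ≤ 3 ^ i := ih hi
      have : 3 ^ (i + 1) = 3 * 3 ^ i := by ring
      omega

lemma dvd_helper {e k C : ℕ} (hk : 2 ≤ k) (h : 3 ^ e ∣ k * C) :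
    3 ^ (e + 2) ∣ 3 ^ k * C := by
  have hk0 : k ≠ 0 := by omega
  set j := k.factorization 3 with hj
  have hkeq : 3 ^ j * (k / 3 ^ j) = k := Nat.ordProj_mul_ordCompl_eq_self k 3
  have hjk : j + 2 ≤ k := by
    have h3j : 3 ^ j ≤ k := Nat.ordProj_le 3 hk0
    rcases Nat.eq_zero_or_pos j with h0 | h1
    · omega
    · have := add_two_le_three_pow h1; omega
  rcases le_or_gt e j with he | he
  · exact dvd_mul_of_dvd_left (pow_dvd_pow 3 (by omega)) C
  · have hco : Nat.Coprime 3 (k / 3 ^ j) :=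
      Nat.coprime_ordCompl (by norm_num) hk0
    have h2 : 3 ^ j * 3 ^ (e - j) ∣ 3 ^ j * ((k / 3 ^ j) * C) := by
      rw [← pow_add, ← mul_assoc, hkeq]
      have : j + (e - j) = e := by omega
      rw [this]; exact h
    have h3 : 3 ^ (e - j) ∣ (k / 3 ^ j) * C :=
      (mul_dvd_mul_iff_left (by positivity : (3:ℕ) ^ j ≠ 0)).mp h2
    have h4 : 3 ^ (e - j) ∣ C :=
      Nat.Coprime.dvd_of_dvd_mul_left (Nat.Coprime.pow_left _ hco) h3
    have : 3 ^ (e + 2) = 3 ^ (j + 2) * 3 ^ (e - j) := by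
      rw [← pow_add]; congr 1; omega
    rw [this]
    exact mul_dvd_mul (pow_dvd_pow 3 hjk) h4

lemma dvd_k_choose {m k e : ℕ} (hm : 1 ≤ m) (hk : 1 ≤ k) (he : 3 ^ e ∣ m) :
    3 ^ e ∣ k * m.choose k := by
  obtain ⟨mm, rfl⟩ := Nat.exists_eq_add_of_le hm
  obtain ⟨kk, rfl⟩ := Nat.exists_eq_add_of_le hk
  have hid := Nat.add_one_mul_choose_eq mm kk
  have : (1 + kk) * (1 + mm).choose (1 + kk) = (1 + mm) * mm.choose kk := by
    rw [mul_comm (1+kk), add_comm 1 kk, add_comm 1 mm]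
    exact hid.symm
  rw [this]
  exact Dvd.dvd.mul_right he _

lemma key (m : ℕ) : narayana (24*m) = ∑ k ∈ Finset.range (m+1), 3^k * m.choose k * c k := by
  have h0 : narayana (24*m) = ((M^(24*m)).mulVec v0) 2 := by
    rw [hvec]; rfl
  rw [h0, pow_mul, hM24]
  have hcomm : Commute (3 • N) (1 : Matrix (Fin 3) (Fin 3) ℕ) := Commute.one_right _
  rw [add_comm, hcomm.add_pow]
  have hterm : ∀ k, (3 • N)^k * (1:Matrix (Fin 3) (Fin 3) ℕ)^(m-k) *
      (m.choose k : Matrix (Fin 3) (Fin 3) ℕ) = (3^k * m.choose k) • N^k := by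
    intro k
    rw [one_pow, mul_one, smul_pow]
    rw [show ((m.choose k : ℕ) : Matrix (Fin 3) (Fin 3) ℕ)
        = (m.choose k) • (1 : Matrix (Fin 3) (Fin 3) ℕ) by simp [nsmul_eq_mul]]
    rw [smul_mul_smul_comm, mul_one]
  simp only [hterm]
  have hsum : (∑ k ∈ Finset.range (m+1), (3^k * m.choose k) • N^k).mulVec v0
      = ∑ k ∈ Finset.range (m+1), ((3^k * m.choose k) • N^k).mulVec v0 := by
    ext i
    simp only [Matrix.mulVec, dotProduct, Finset.sum_apply, Finset.sum_mul,
      Matrix.sum_apply]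
    rw [Finset.sum_comm]
  rw [hsum, Finset.sum_apply]
  refine Finset.sum_congr rfl fun k _ => ?_
  rw [Matrix.smul_mulVec, Pi.smul_apply, smul_eq_mul]
  rfl

end NarayanaAux

open NarayanaAux in
theorem narayana_val_0 (n : ℕ) (hn : 1 ≤ n) (h : n % 24 = 0) :
    padicValNat 3 (narayana n) = padicValNat 3 n + 2 := by
  haveI : Fact (Nat.Prime 3) := ⟨by norm_num⟩
  obtain ⟨m, rfl⟩ : ∃ m, n = 24 * m := ⟨n / 24, by omega⟩
  have hm : 1 ≤ m := by omega
  set e := m.factorization 3 with hedef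
  set m' := m / 3 ^ e with hm'def
  have hmm : 3 ^ e * m' = m := Nat.ordProj_mul_ordCompl_eq_self m 3
  have hm'3 : ¬ 3 ∣ m' := Nat.not_dvd_ordCompl (by norm_num) (by omega)
  have hm'pos : 1 ≤ m' := by
    rcases Nat.eq_zero_or_pos m' with h0 | h1
    · rw [h0, mul_zero] at hmm; omega
    · exact h1
  have h1mem : (1:ℕ) ∈ Finset.range (m+1) := by
    simp only [Finset.mem_range]; omega
  have hsplit := Finset.add_sum_erase _ (fun k => 3^k * m.choose k * c k) h1mem
  have hdvd : 3^(e+4) ∣ ∑ k ∈ (Finset.range (m+1)).erase 1, 3^k * m.choose k * c k := by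
    refine Finset.dvd_sum fun k hk => ?_
    have hk1 : k ≠ 1 := (Finset.mem_erase.mp hk).1
    rcases Nat.eq_zero_or_pos k with rfl | hkpos
    · simp [hc0]
    · have hk2 : 2 ≤ k := by omega
      obtain ⟨d, hd⟩ := hc9 hk2
      have hch : 3 ^ (e+2) ∣ 3 ^ k * m.choose k :=
        dvd_helper hk2 (dvd_k_choose hm (by omega) (Nat.ordProj_dvd m 3))
      have h9 : 3^(e+4) = 3^(e+2) * 9 := by ring
      calc 3^(e+4) = 3^(e+2) * 9 := h9
        _ ∣ (3^k * m.choose k) * 9 := mul_dvd_mul_right hch 9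
        _ ∣ (3^k * m.choose k) * (9 * d) := by
            rw [← mul_assoc]; exact dvd_mul_right _ d
        _ = 3^k * m.choose k * c k := by rw [hd]
  obtain ⟨t, ht⟩ := hdvd
  have hfinal : narayana (24*m) = 3^(e+3) * (149 * m' + 3 * t) := by
    rw [key m, ← hsplit, ht]
    simp only [hc1, Nat.choose_one_right]
    rw [← hmm]
    ring
  rw [hfinal]
  have hu3 : ¬ 3 ∣ (149 * m' + 3 * t) := by omega
  have hu0 : 149 * m' + 3 * t ≠ 0 := by omega
  rw [padicValNat.mul (by positivity) hu0, padicValNat.prime_pow,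
    padicValNat.eq_zero_of_not_dvd hu3]
  have h24 : padicValNat 3 (24 * m) = 1 + e := by
    rw [padicValNat.mul (by norm_num) (by omega)]
    have h24' : padicValNat 3 24 = 1 := by
      rw [show (24:ℕ) = 3 * 8 from rfl, padicValNat.mul (by norm_num) (by norm_num),
        padicValNat.self (by norm_num), padicValNat.eq_zero_of_not_dvd (by norm_num)]
    rw [h24', hedef, Nat.factorization_def m (by norm_num)]
  rw [h24]
  omega
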